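/- arXiv:1506.03798 — 3 statements merged into one kernel-verified Lean document; each statement's English description precedes it below -/
import Mathlib

section
/- For a k-tuple of skew shapes μ and a standard filling T of μ, the combined involution D_i (acting by d_i when the three values i-1, i, i+1 are pairwise at shifted-content distance more than k, and by the twisted move d̃_i when their maximal pairwise shifted-content distance is at most k) preserves the diagonal descent set: dDes(D_i(T)) = dDes(T). -/
/-!  A `k`-tuple of skew shapes is modelled as `S : Fin k → Finset (ℕ × ℕ)`
with each `S j` the cell set of a skew diagram `λ/μ`; a cell of the tuple is
an element of `Fin k × ℕ × ℕ`, written `(j, r, c)` for row `r`, column `c` of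
the `j`-th component.  A standard filling assigns `1,…,N` bijectively to the
cells, increasing along rows and columns of each component. -/

/-- All cells of the tuple of shapes. -/
def tupleCells (k : ℕ) (S : Fin k → Finset (ℕ × ℕ)) : Finset (Fin k × ℕ × ℕ) :=
  Finset.univ.biUnion fun j => (S j).image fun c => (j, c)

/-- The shifted content `c̃(x) = k·c(x) + j` of a cell `x = (j, r, c)`, where
`c(x) = c - r` is the usual content. -/
def shiftedContent (k : ℕ) (x : Fin k × ℕ × ℕ) : ℤ :=
  (k : ℤ) * ((x.2.2 : ℤ) - (x.2.1 : ℤ)) + (x.1 : ℤ)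

/-- The content reading order: increasing shifted content, and southwest to
northeast (increasing column) along each diagonal. -/
def tupleRlt (k : ℕ) (x y : Fin k × ℕ × ℕ) : Prop :=
  shiftedContent k x < shiftedContent k y ∨
    (shiftedContent k x = shiftedContent k y ∧ x.2.2 < y.2.2)

instance (k : ℕ) (x y : Fin k × ℕ × ℕ) : Decidable (tupleRlt k x y) :=
  inferInstanceAs (Decidable (_ ∨ _ ∧ _))

/-- `S j` is a skew diagram (a set-difference of Young diagrams). -/
def IsSkewShape (s : Finset (ℕ × ℕ)) : Prop :=
  ∃ lam mu : YoungDiagram, mu ≤ lam ∧ s = lam.cells \ mu.cells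

/-- `T` is a standard filling of the tuple of shapes `S`. -/
def IsStandardTuple (k : ℕ) (S : Fin k → Finset (ℕ × ℕ))
    (T : Fin k × ℕ × ℕ → ℕ) : Prop :=
  Set.BijOn T ↑(tupleCells k S) (Set.Icc 1 (tupleCells k S).card) ∧
  (∀ x, x ∉ tupleCells k S → T x = 0) ∧
  (∀ (j : Fin k) (r c : ℕ), (r, c) ∈ S j → (r, c + 1) ∈ S j →
    T (j, r, c) < T (j, r, c + 1)) ∧
  (∀ (j : Fin k) (r c : ℕ), (r, c) ∈ S j → (r + 1, c) ∈ S j →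
    T (j, r, c) < T (j, r + 1, c))

/-- The cell of `T` containing the value `v` (via choice). -/
noncomputable def tupleCellOf (k : ℕ) [NeZero k] (T : Fin k × ℕ × ℕ → ℕ)
    (v : ℕ) : Fin k × ℕ × ℕ :=
  haveI : Nonempty (Fin k × ℕ × ℕ) :=
    ⟨(⟨0, Nat.pos_of_ne_zero (NeZero.ne k)⟩, 0, 0)⟩
  Classical.epsilon fun x => T x = v

/-- The combined involution `D_i` on standard fillings of a `k`-tuple of
shapes: it acts by the elementary dual equivalence move `d_i` when the maximal
pairwise shifted-content distance of the cells of `i-1, i, i+1` exceeds `k`,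
and by the twisted move `d̃_i` when that distance is at most `k`; both act on
the content reading word. -/
noncomputable def Dmove (k : ℕ) [NeZero k] (i : ℕ)
    (T : Fin k × ℕ × ℕ → ℕ) : Fin k × ℕ × ℕ → ℕ :=
  let a := i - 1
  let b := i
  let c := i + 1
  let xa := tupleCellOf k T a
  let xb := tupleCellOf k T b
  let xc := tupleCellOf k T c
  if (tupleRlt k xa xb ∧ tupleRlt k xb xc) ∨
      (tupleRlt k xc xb ∧ tupleRlt k xb xa) then T
  else if (k : ℤ) <
      max (max |shiftedContent k xa - shiftedContent k xb|
               |shiftedContent k xc - shiftedContent k xb|)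
          |shiftedContent k xa - shiftedContent k xc| then
    -- untwisted move: interchange `b` with the further of `a, c`
    let p := if tupleRlt k xb xa ∧ tupleRlt k xb xc then
               (if tupleRlt k xa xc then c else a)
             else (if tupleRlt k xa xc then a else c)
    fun x => if T x = b then p else if T x = p then b else T x
  else
    -- twisted move: cyclically rotate `a, b, c` so `b` crosses over
    let u := if tupleRlt k xa xc then a else c  -- outer value occurring first
    let v := if tupleRlt k xa xc then c else a  -- outer value occurring last
    if tupleRlt k xb xa ∧ tupleRlt k xb xc then
      fun x => if T x = b then u else if T x = u then v
               else if T x = v then b else T x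
    else
      fun x => if T x = u then b else if T x = v then u
               else if T x = b then v else T x

/-- The set of diagonal descents of `T`. -/
def dDesSet (k : ℕ) (S : Fin k → Finset (ℕ × ℕ)) (T : Fin k × ℕ × ℕ → ℕ) :
    Set ((Fin k × ℕ × ℕ) × (Fin k × ℕ × ℕ)) :=
  {p | p.1 ∈ tupleCells k S ∧ p.2 ∈ tupleCells k S ∧
    shiftedContent k p.2 - shiftedContent k p.1 = (k : ℤ) ∧ T p.2 < T p.1}

/-- The set of diagonal inversions of `T`. -/
def dInvSet (k : ℕ) (S : Fin k → Finset (ℕ × ℕ)) (T : Fin k × ℕ × ℕ → ℕ) :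
    Set ((Fin k × ℕ × ℕ) × (Fin k × ℕ × ℕ)) :=
  {p | p.1 ∈ tupleCells k S ∧ p.2 ∈ tupleCells k S ∧
    0 < shiftedContent k p.2 - shiftedContent k p.1 ∧
    shiftedContent k p.2 - shiftedContent k p.1 < (k : ℤ) ∧ T p.2 < T p.1}

section Aux

variable {k : ℕ} {S : Fin k → Finset (ℕ × ℕ)} {T : Fin k × ℕ × ℕ → ℕ}

lemma mem_tupleCells {j : Fin k} {r c : ℕ} :
    (j, r, c) ∈ tupleCells k S ↔ (r, c) ∈ S j := by
  simp only [tupleCells, Finset.mem_biUnion, Finset.mem_univ, true_and,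
    Finset.mem_image, Prod.mk.injEq]
  constructor
  · rintro ⟨j', p, hp, rfl, h2⟩
    rwa [← h2]
  · intro h
    exact ⟨j, (r, c), h, rfl, rfl⟩

lemma rlt_iff {x y : Fin k × ℕ × ℕ}
    (h : shiftedContent k x ≠ shiftedContent k y) :
    tupleRlt k x y ↔ shiftedContent k x < shiftedContent k y :=
  ⟨fun h' => h'.elim id fun he => absurd he.1 h, Or.inl⟩

lemma cellOf_spec [NeZero k] (hT : IsStandardTuple k S T) {v : ℕ}
    (hv : v ∈ Set.Icc 1 (tupleCells k S).card) :
    tupleCellOf k T v ∈ tupleCells k S ∧ T (tupleCellOf k T v) = v := by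
  obtain ⟨x, hx, hxv⟩ := hT.1.surjOn hv
  have h : T (tupleCellOf k T v) = v :=
    Classical.epsilon_spec (p := fun x => T x = v) ⟨x, hxv⟩
  refine ⟨?_, h⟩
  by_contra hmem
  have h0 := hT.2.1 _ hmem
  rw [Set.mem_Icc] at hv
  omega

lemma cellOf_unique [NeZero k] (hT : IsStandardTuple k S T) {v : ℕ}
    (hv : v ∈ Set.Icc 1 (tupleCells k S).card) {x : Fin k × ℕ × ℕ}
    (hx : x ∈ tupleCells k S) (hxv : T x = v) : x = tupleCellOf k T v := by
  have h := cellOf_spec hT hv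
  exact hT.1.injOn hx h.1 (by rw [hxv, h.2])

lemma skew_diag {s : Finset (ℕ × ℕ)} (hs : IsSkewShape s) {r c t : ℕ}
    (h1 : (r, c) ∈ s) (h2 : (r + t + 1, c + t + 1) ∈ s) :
    (r, c + 1) ∈ s ∧ (r + 1, c) ∈ s ∧ (r + 1, c + 1) ∈ s := by
  obtain ⟨lam, mu, hle, rfl⟩ := hs
  simp only [Finset.mem_sdiff, YoungDiagram.mem_cells] at h1 h2 ⊢
  refine ⟨⟨lam.up_left_mem (by omega) (by omega) h2.1,
      fun hm => h1.2 (mu.up_left_mem (by omega) (by omega) hm)⟩,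
    ⟨lam.up_left_mem (by omega) (by omega) h2.1,
      fun hm => h1.2 (mu.up_left_mem (by omega) (by omega) hm)⟩,
    lam.up_left_mem (by omega) (by omega) h2.1,
      fun hm => h1.2 (mu.up_left_mem (by omega) (by omega) hm)⟩

lemma diag_mono (hT : IsStandardTuple k S T) (hS : ∀ j, IsSkewShape (S j))
    {j : Fin k} {r c t : ℕ} (h1 : (r, c) ∈ S j) (h2 : (r + t + 1, c + t + 1) ∈ S j) :
    T (j, r, c) < T (j, r + t + 1, c + t + 1) := by
  induction t generalizing r c with
  | zero =>
    simp only [Nat.add_zero] at h2 ⊢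
    obtain ⟨hu, hw, hd⟩ := skew_diag (t := 0) (hS j) h1 (by simpa using h2)
    exact lt_trans (hT.2.2.1 j r c h1 hu) (hT.2.2.2 j r (c + 1) hu h2)
  | succ t ih =>
    obtain ⟨hu, hw, hd⟩ := skew_diag (t := t + 1) (hS j) h1 h2
    have l1 : T (j, r, c) < T (j, r + 1, c + 1) :=
      lt_trans (hT.2.2.1 j r c h1 hu) (hT.2.2.2 j r (c + 1) hu hd)
    have h2' : (r + 1 + t + 1, c + 1 + t + 1) ∈ S j := by
      have e1 : r + 1 + t + 1 = r + (t + 1) + 1 := by omega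
      have e2 : c + 1 + t + 1 = c + (t + 1) + 1 := by omega
      rw [e1, e2]; exact h2
    have l2 := ih hd h2'
    have e1 : r + 1 + t + 1 = r + (t + 1) + 1 := by omega
    have e2 : c + 1 + t + 1 = c + (t + 1) + 1 := by omega
    rw [e1, e2] at l2
    exact lt_trans l1 l2

end Aux
section Aux2

variable {k : ℕ} {S : Fin k → Finset (ℕ × ℕ)} {T : Fin k × ℕ × ℕ → ℕ}

/-- Directional version: same shifted content, smaller row first. -/
lemma close_values_aux (hT : IsStandardTuple k S T) (hS : ∀ j, IsSkewShape (S j))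
    {j : Fin k} {r1 c1 r2 c2 : ℕ} (h1 : (r1, c1) ∈ S j) (h2 : (r2, c2) ∈ S j)
    (hr : r1 < r2) (hcont : (c1 : ℤ) - r1 = (c2 : ℤ) - r2) :
    T (j, r1, c1) + 3 ≤ T (j, r2, c2) := by
  obtain ⟨t, rfl⟩ : ∃ t, r2 = r1 + t + 1 := ⟨r2 - r1 - 1, by omega⟩
  have hc2 : c2 = c1 + t + 1 := by omega
  subst hc2
  obtain ⟨hu, hw, hd⟩ := skew_diag (hS j) h1 h2
  -- u := (j, r1, c1+1), w := (j, r1+1, c1)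
  have hxu : T (j, r1, c1) < T (j, r1, c1 + 1) := hT.2.2.1 j r1 c1 h1 hu
  have hxw : T (j, r1, c1) < T (j, r1 + 1, c1) := hT.2.2.2 j r1 c1 h1 hw
  have hud : T (j, r1, c1 + 1) < T (j, r1 + 1, c1 + 1) := hT.2.2.2 j r1 (c1 + 1) hu hd
  have hwd : T (j, r1 + 1, c1) < T (j, r1 + 1, c1 + 1) := hT.2.2.1 j (r1 + 1) c1 hw hd
  have hdy : T (j, r1 + 1, c1 + 1) ≤ T (j, r1 + t + 1, c1 + t + 1) := by
    rcases Nat.eq_zero_or_pos t with rfl | ht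
    · exact le_refl _
    · obtain ⟨t', rfl⟩ : ∃ t', t = t' + 1 := ⟨t - 1, by omega⟩
      have h2' : (r1 + 1 + t' + 1, c1 + 1 + t' + 1) ∈ S j := by
        have e1 : r1 + 1 + t' + 1 = r1 + (t' + 1) + 1 := by omega
        have e2 : c1 + 1 + t' + 1 = c1 + (t' + 1) + 1 := by omega
        rw [e1, e2]; exact h2
      have := diag_mono hT hS hd h2'
      have e1 : r1 + 1 + t' + 1 = r1 + (t' + 1) + 1 := by omega
      have e2 : c1 + 1 + t' + 1 = c1 + (t' + 1) + 1 := by omega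
      rw [e1, e2] at this
      exact le_of_lt this
  have hne : T (j, r1, c1 + 1) ≠ T (j, r1 + 1, c1) := by
    intro h
    have := hT.1.injOn (mem_tupleCells.mpr hu) (mem_tupleCells.mpr hw) h
    simp at this
  omega

/-- Two distinct cells with the same shifted content have values at distance ≥ 3. -/
lemma close_values [NeZero k] (hT : IsStandardTuple k S T) (hS : ∀ j, IsSkewShape (S j))
    {x y : Fin k × ℕ × ℕ} (hx : x ∈ tupleCells k S) (hy : y ∈ tupleCells k S)
    (hxy : x ≠ y) (hc : shiftedContent k x = shiftedContent k y) :
    T x + 3 ≤ T y ∨ T y + 3 ≤ T x := by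
  obtain ⟨j1, r1, c1⟩ := x
  obtain ⟨j2, r2, c2⟩ := y
  have hk : 0 < k := Nat.pos_of_ne_zero (NeZero.ne k)
  -- same component
  have hj : j1 = j2 := by
    have hD : ((c2 : ℤ) - r2) - ((c1 : ℤ) - r1) = 0 := by
      by_contra hD
      have h1 : (1 : ℤ) ≤ |((c2 : ℤ) - r2) - ((c1 : ℤ) - r1)| := Int.one_le_abs (by omega)
      have h2 : (k : ℤ) * 1 ≤ (k : ℤ) * |((c2 : ℤ) - r2) - ((c1 : ℤ) - r1)| :=
        mul_le_mul_of_nonneg_left h1 (by positivity)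
      have h3 : (j1 : ℤ) - j2 = (k : ℤ) * (((c2 : ℤ) - r2) - ((c1 : ℤ) - r1)) := by
        simp only [shiftedContent] at hc; push_cast at hc ⊢; ring_nf; ring_nf at hc; omega
      have h4 : |(j1 : ℤ) - j2| = (k : ℤ) * |((c2 : ℤ) - r2) - ((c1 : ℤ) - r1)| := by
        rw [h3, abs_mul, abs_of_nonneg (by positivity : (0:ℤ) ≤ (k:ℤ))]
      have hj1 : (j1 : ℤ) < k := by exact_mod_cast j1.2
      have hj2 : (j2 : ℤ) < k := by exact_mod_cast j2.2
      have hj1' : (0 : ℤ) ≤ (j1 : ℤ) := by positivity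
      have hj2' : (0 : ℤ) ≤ (j2 : ℤ) := by positivity
      have : |(j1 : ℤ) - j2| < k := abs_sub_lt_of_nonneg_of_lt hj1' hj1 hj2' hj2
      omega
    have : (j1 : ℤ) = j2 := by
      simp only [shiftedContent] at hc
      have : (k : ℤ) * ((c1 : ℤ) - r1) = (k : ℤ) * ((c2 : ℤ) - r2) := by nlinarith [hD]
      omega
    exact Fin.ext (by exact_mod_cast this)
  subst hj
  have hcont : (c1 : ℤ) - r1 = (c2 : ℤ) - r2 := by
    simp only [shiftedContent] at hc
    have h5 : (k : ℤ) * ((c1 : ℤ) - r1) = (k : ℤ) * ((c2 : ℤ) - r2) := by omega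
    exact mul_left_cancel₀ (by exact_mod_cast hk.ne' : (k : ℤ) ≠ 0) h5
  have h1 : (r1, c1) ∈ S j1 := mem_tupleCells.mp hx
  have h2 : (r2, c2) ∈ S j1 := mem_tupleCells.mp hy
  rcases lt_trichotomy r1 r2 with hr | hr | hr
  · exact Or.inl (close_values_aux hT hS h1 h2 hr hcont)
  · exfalso; apply hxy; subst hr
    have : c1 = c2 := by omega
    subst this
    rfl
  · exact Or.inr (close_values_aux hT hS h2 h1 hr hcont.symm)

end Aux2
section Aux3

variable {k : ℕ} {S : Fin k → Finset (ℕ × ℕ)} {T : Fin k × ℕ × ℕ → ℕ}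

lemma key_lemma (hT : IsStandardTuple k S T) (σ : ℕ → ℕ) (hσ0 : σ 0 = 0)
    (hbij : Set.BijOn σ (Set.Icc 1 (tupleCells k S).card)
      (Set.Icc 1 (tupleCells k S).card))
    (hmono : ∀ x y, x ∈ tupleCells k S → y ∈ tupleCells k S →
      |shiftedContent k x - shiftedContent k y| = (k : ℤ) →
      (T x < T y ↔ σ (T x) < σ (T y))) :
    IsStandardTuple k S (fun x => σ (T x)) ∧
      dDesSet k S (fun x => σ (T x)) = dDesSet k S T := by
  have hk0 : (0 : ℤ) ≤ (k : ℤ) := by positivity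
  constructor
  · refine ⟨hbij.comp hT.1, fun x hx => by simp only []; rw [hT.2.1 x hx, hσ0], ?_, ?_⟩
    · intro j r c hc1 hc2
      have habs : |shiftedContent k (j, r, c) - shiftedContent k (j, r, c + 1)| = (k : ℤ) := by
        simp only [shiftedContent]
        push_cast
        rw [show (k : ℤ) * ((c : ℤ) - r) + j - ((k : ℤ) * (((c : ℤ) + 1) - r) + j)
          = -(k : ℤ) by ring, abs_neg, abs_of_nonneg hk0]
      exact (hmono _ _ (mem_tupleCells.mpr hc1) (mem_tupleCells.mpr hc2) habs).mp
        (hT.2.2.1 j r c hc1 hc2)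
    · intro j r c hc1 hc2
      have habs : |shiftedContent k (j, r, c) - shiftedContent k (j, r + 1, c)| = (k : ℤ) := by
        simp only [shiftedContent]
        push_cast
        rw [show (k : ℤ) * ((c : ℤ) - r) + j - ((k : ℤ) * ((c : ℤ) - ((r : ℤ) + 1)) + j)
          = (k : ℤ) by ring, abs_of_nonneg hk0]
      exact (hmono _ _ (mem_tupleCells.mpr hc1) (mem_tupleCells.mpr hc2) habs).mp
        (hT.2.2.2 j r c hc1 hc2)
  · ext p
    simp only [dDesSet, Set.mem_setOf_eq]
    constructor
    · rintro ⟨hp1, hp2, hp3, hp4⟩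
      refine ⟨hp1, hp2, hp3, ?_⟩
      exact (hmono p.2 p.1 hp2 hp1 (by rw [hp3, abs_of_nonneg hk0])).mpr hp4
    · rintro ⟨hp1, hp2, hp3, hp4⟩
      refine ⟨hp1, hp2, hp3, ?_⟩
      exact (hmono p.2 p.1 hp2 hp1 (by rw [hp3, abs_of_nonneg hk0])).mp hp4

lemma bijOn_swap {u v N : ℕ} (hu1 : 1 ≤ u) (hu2 : u ≤ N) (hv1 : 1 ≤ v) (hv2 : v ≤ N) :
    Set.BijOn (fun t => if t = u then v else if t = v then u else t)
      (Set.Icc 1 N) (Set.Icc 1 N) := by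
  refine ⟨?_, ?_, ?_⟩
  · intro t ht
    simp only [Set.mem_Icc] at ht ⊢
    split_ifs <;> omega
  · intro t1 h1 t2 h2 h
    simp only at h
    split_ifs at h <;> omega
  · intro w hw
    simp only [Set.mem_Icc] at hw
    refine ⟨if w = v then u else if w = u then v else w, ?_, ?_⟩
    · simp only [Set.mem_Icc]; split_ifs <;> omega
    · simp only; split_ifs <;> omega

lemma bijOn_cycle {p q r N : ℕ} (hp1 : 1 ≤ p) (hp2 : p ≤ N) (hq1 : 1 ≤ q) (hq2 : q ≤ N)
    (hr1 : 1 ≤ r) (hr2 : r ≤ N) (hpq : p ≠ q) (hqr : q ≠ r) (hpr : p ≠ r) :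
    Set.BijOn (fun t => if t = p then q else if t = q then r else if t = r then p else t)
      (Set.Icc 1 N) (Set.Icc 1 N) := by
  refine ⟨?_, ?_, ?_⟩
  · intro t ht
    simp only [Set.mem_Icc] at ht ⊢
    split_ifs <;> omega
  · intro t1 h1 t2 h2 h
    simp only at h
    split_ifs at h <;> omega
  · intro w hw
    simp only [Set.mem_Icc] at hw
    refine ⟨if w = q then p else if w = r then q else if w = p then r else w, ?_, ?_⟩
    · simp only [Set.mem_Icc]; split_ifs <;> omega
    · simp only; split_ifs <;> omega

lemma bijOn_cycle' {p q r N : ℕ} (hp1 : 1 ≤ p) (hp2 : p ≤ N) (hq1 : 1 ≤ q) (hq2 : q ≤ N)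
    (hr1 : 1 ≤ r) (hr2 : r ≤ N) (hpq : p ≠ q) (hqr : q ≠ r) (hpr : p ≠ r) :
    Set.BijOn (fun t => if t = p then q else if t = r then p else if t = q then r else t)
      (Set.Icc 1 N) (Set.Icc 1 N) := by
  refine ⟨?_, ?_, ?_⟩
  · intro t ht
    simp only [Set.mem_Icc] at ht ⊢
    split_ifs <;> omega
  · intro t1 h1 t2 h2 h
    simp only at h
    split_ifs at h <;> omega
  · intro w hw
    simp only [Set.mem_Icc] at hw
    refine ⟨if w = q then p else if w = p then r else if w = r then q else w, ?_, ?_⟩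
    · simp only [Set.mem_Icc]; split_ifs <;> omega
    · simp only; split_ifs <;> omega

/-- Order is preserved when at least one of the two values is outside the triple. -/
lemma mono_outside {i : ℕ} (hi : 1 < i) (σ : ℕ → ℕ)
    (hfix : ∀ t, t < i - 1 ∨ i + 1 < t → σ t = t)
    (hrange : ∀ t, i - 1 ≤ t → t ≤ i + 1 → i - 1 ≤ σ t ∧ σ t ≤ i + 1)
    {u v : ℕ} (huv : ¬(i - 1 ≤ u ∧ u ≤ i + 1) ∨ ¬(i - 1 ≤ v ∧ v ≤ i + 1)) :
    (u < v ↔ σ u < σ v) := by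
  by_cases hu : i - 1 ≤ u ∧ u ≤ i + 1
  · have hv : ¬(i - 1 ≤ v ∧ v ≤ i + 1) := by tauto
    have h1 := hrange u hu.1 hu.2
    have h2 := hfix v (by omega)
    omega
  · have h1 := hfix u (by omega)
    by_cases hv : i - 1 ≤ v ∧ v ≤ i + 1
    · have h2 := hrange v hv.1 hv.2
      omega
    · have h2 := hfix v (by omega)
      omega

end Aux3
set_option maxHeartbeats 1000000 in
/-- for a `k`-tuple of skew shapes `μ` and a standard filling
`T`, the combined involution `D_i` produces again a standard filling of `μ`
and preserves the diagonal descent set: `dDes(D_i(T)) = dDes(T)`. -/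
theorem Dmove_dDes (k : ℕ) [NeZero k] (S : Fin k → Finset (ℕ × ℕ))
    (hS : ∀ j, IsSkewShape (S j)) (T : Fin k × ℕ × ℕ → ℕ)
    (hT : IsStandardTuple k S T) (i : ℕ) (hi : 1 < i)
    (hin : i < (tupleCells k S).card) :
    IsStandardTuple k S (Dmove k i T) ∧
      dDesSet k S (Dmove k i T) = dDesSet k S T := by
  have hk : 0 < k := Nat.pos_of_ne_zero (NeZero.ne k)
  have hk0 : (0 : ℤ) ≤ (k : ℤ) := by positivity
  have hia : i - 1 ∈ Set.Icc 1 (tupleCells k S).card := by rw [Set.mem_Icc]; omega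
  have hib : i ∈ Set.Icc 1 (tupleCells k S).card := by rw [Set.mem_Icc]; omega
  have hic : i + 1 ∈ Set.Icc 1 (tupleCells k S).card := by rw [Set.mem_Icc]; omega
  obtain ⟨hxaC, hxaT⟩ := cellOf_spec hT hia
  obtain ⟨hxbC, hxbT⟩ := cellOf_spec hT hib
  obtain ⟨hxcC, hxcT⟩ := cellOf_spec hT hic
  set xa := tupleCellOf k T (i - 1) with hxa
  set xb := tupleCellOf k T i with hxb
  set xc := tupleCellOf k T (i + 1) with hxc
  have hxab : xa ≠ xb := fun h => by rw [h, hxbT] at hxaT; omega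
  have hxbc : xb ≠ xc := fun h => by rw [h, hxcT] at hxbT; omega
  have hxac : xa ≠ xc := fun h => by rw [h, hxcT] at hxaT; omega
  have hab : shiftedContent k xa ≠ shiftedContent k xb := fun h => by
    rcases close_values hT hS hxaC hxbC hxab h with h' | h' <;>
      (rw [hxaT, hxbT] at h'; omega)
  have hbc : shiftedContent k xb ≠ shiftedContent k xc := fun h => by
    rcases close_values hT hS hxbC hxcC hxbc h with h' | h' <;>
      (rw [hxbT, hxcT] at h'; omega)
  have hac : shiftedContent k xa ≠ shiftedContent k xc := fun h => by
    rcases close_values hT hS hxaC hxcC hxac h with h' | h' <;>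
      (rw [hxaT, hxcT] at h'; omega)
  have idc : ∀ z, z ∈ tupleCells k S →
      (T z = i - 1 → z = xa) ∧ (T z = i → z = xb) ∧ (T z = i + 1 → z = xc) := by
    intro z hz
    exact ⟨fun h => by rw [hxa]; exact cellOf_unique hT hia hz h,
           fun h => by rw [hxb]; exact cellOf_unique hT hib hz h,
           fun h => by rw [hxc]; exact cellOf_unique hT hic hz h⟩
  by_cases hC1 : (tupleRlt k xa xb ∧ tupleRlt k xb xc) ∨
      (tupleRlt k xc xb ∧ tupleRlt k xb xa)
  · -- identity branch
    have hD : Dmove k i T = T := by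
      simp only [Dmove]
      rw [← hxa, ← hxb, ← hxc, if_pos hC1]
    rw [hD]
    exact ⟨hT, rfl⟩
  · have hC1c : ¬((shiftedContent k xa < shiftedContent k xb ∧
        shiftedContent k xb < shiftedContent k xc) ∨
        (shiftedContent k xc < shiftedContent k xb ∧
        shiftedContent k xb < shiftedContent k xa)) := by
      have h := hC1
      rw [rlt_iff hab, rlt_iff hbc, rlt_iff (Ne.symm hbc), rlt_iff (Ne.symm hab)] at h
      exact h
    by_cases hC2 : (k : ℤ) <
        max (max |shiftedContent k xa - shiftedContent k xb|
                 |shiftedContent k xc - shiftedContent k xb|)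
            |shiftedContent k xa - shiftedContent k xc|
    · -- untwisted branch
      by_cases hCb : tupleRlt k xb xa ∧ tupleRlt k xb xc
      · have hCbc : shiftedContent k xb < shiftedContent k xa ∧
            shiftedContent k xb < shiftedContent k xc := by
          have h := hCb
          rw [rlt_iff (Ne.symm hab), rlt_iff hbc] at h
          exact h
        by_cases hCac : tupleRlt k xa xc
        · have hCacc : shiftedContent k xa < shiftedContent k xc :=
            (rlt_iff hac).mp hCac
          have hfar : (k : ℤ) < shiftedContent k xc - shiftedContent k xb := by
            rcases lt_max_iff.mp hC2 with h | h
            · rcases lt_max_iff.mp h with h | h <;> rcases lt_abs.mp h with h | h <;> omega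
            · rcases lt_abs.mp h with h | h <;> omega
          have hD : Dmove k i T = fun x =>
              if T x = i then i + 1 else if T x = i + 1 then i else T x := by
            simp only [Dmove]
            rw [← hxa, ← hxb, ← hxc, if_neg hC1, if_pos hC2, if_pos hCb, if_pos hCac]
          rw [hD]
          clear hC2 hC1 hCb hCac
          refine key_lemma hT
            (fun t => if t = i then i + 1 else if t = i + 1 then i else t)
            (by beta_reduce; split_ifs <;> first | omega | exact absurd ‹_› (by omega) | exact ‹False›.elim)
            (bijOn_swap (by omega) (by omega) (by omega) (by omega)) ?_
          intro x y hx hy habs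
          have habs' := (abs_eq hk0).mp habs
          by_cases hflip : (T x = i ∧ T y = i + 1) ∨ (T x = i + 1 ∧ T y = i)
          · exfalso
            rcases hflip with ⟨h1, h2⟩ | ⟨h1, h2⟩
            · have e1 := (idc x hx).2.1 h1
              have e2 := (idc y hy).2.2 h2
              subst e1; subst e2; omega
            · have e1 := (idc x hx).2.2 h1
              have e2 := (idc y hy).2.1 h2
              subst e1; subst e2; omega
          · beta_reduce
            split_ifs <;> omega
        · have hCacc : shiftedContent k xc < shiftedContent k xa := by
            have h := hCac
            rw [rlt_iff hac] at h
            omega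
          have hfar : (k : ℤ) < shiftedContent k xa - shiftedContent k xb := by
            rcases lt_max_iff.mp hC2 with h | h
            · rcases lt_max_iff.mp h with h | h <;> rcases lt_abs.mp h with h | h <;> omega
            · rcases lt_abs.mp h with h | h <;> omega
          have hD : Dmove k i T = fun x =>
              if T x = i then i - 1 else if T x = i - 1 then i else T x := by
            simp only [Dmove]
            rw [← hxa, ← hxb, ← hxc, if_neg hC1, if_pos hC2, if_pos hCb, if_neg hCac]
          rw [hD]
          clear hC2 hC1 hCb hCac
          refine key_lemma hT
            (fun t => if t = i then i - 1 else if t = i - 1 then i else t)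
            (by beta_reduce; split_ifs <;> first | omega | exact absurd ‹_› (by omega) | exact ‹False›.elim)
            (bijOn_swap (by omega) (by omega) (by omega) (by omega)) ?_
          intro x y hx hy habs
          have habs' := (abs_eq hk0).mp habs
          by_cases hflip : (T x = i ∧ T y = i - 1) ∨ (T x = i - 1 ∧ T y = i)
          · exfalso
            rcases hflip with ⟨h1, h2⟩ | ⟨h1, h2⟩
            · have e1 := (idc x hx).2.1 h1
              have e2 := (idc y hy).1 h2
              subst e1; subst e2; omega
            · have e1 := (idc x hx).1 h1
              have e2 := (idc y hy).2.1 h2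
              subst e1; subst e2; omega
          · beta_reduce
            split_ifs <;> omega
      · have hCbc : shiftedContent k xa < shiftedContent k xb ∧
            shiftedContent k xc < shiftedContent k xb := by
          have h := hCb
          rw [rlt_iff (Ne.symm hab), rlt_iff hbc] at h
          omega
        by_cases hCac : tupleRlt k xa xc
        · have hCacc : shiftedContent k xa < shiftedContent k xc :=
            (rlt_iff hac).mp hCac
          have hfar : (k : ℤ) < shiftedContent k xb - shiftedContent k xa := by
            rcases lt_max_iff.mp hC2 with h | h
            · rcases lt_max_iff.mp h with h | h <;> rcases lt_abs.mp h with h | h <;> omega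
            · rcases lt_abs.mp h with h | h <;> omega
          have hD : Dmove k i T = fun x =>
              if T x = i then i - 1 else if T x = i - 1 then i else T x := by
            simp only [Dmove]
            rw [← hxa, ← hxb, ← hxc, if_neg hC1, if_pos hC2, if_neg hCb, if_pos hCac]
          rw [hD]
          clear hC2 hC1 hCb hCac
          refine key_lemma hT
            (fun t => if t = i then i - 1 else if t = i - 1 then i else t)
            (by beta_reduce; split_ifs <;> first | omega | exact absurd ‹_› (by omega) | exact ‹False›.elim)
            (bijOn_swap (by omega) (by omega) (by omega) (by omega)) ?_
          intro x y hx hy habs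
          have habs' := (abs_eq hk0).mp habs
          by_cases hflip : (T x = i ∧ T y = i - 1) ∨ (T x = i - 1 ∧ T y = i)
          · exfalso
            rcases hflip with ⟨h1, h2⟩ | ⟨h1, h2⟩
            · have e1 := (idc x hx).2.1 h1
              have e2 := (idc y hy).1 h2
              subst e1; subst e2; omega
            · have e1 := (idc x hx).1 h1
              have e2 := (idc y hy).2.1 h2
              subst e1; subst e2; omega
          · beta_reduce
            split_ifs <;> omega
        · have hCacc : shiftedContent k xc < shiftedContent k xa := by
            have h := hCac
            rw [rlt_iff hac] at h
            omega
          have hfar : (k : ℤ) < shiftedContent k xb - shiftedContent k xc := by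
            rcases lt_max_iff.mp hC2 with h | h
            · rcases lt_max_iff.mp h with h | h <;> rcases lt_abs.mp h with h | h <;> omega
            · rcases lt_abs.mp h with h | h <;> omega
          have hD : Dmove k i T = fun x =>
              if T x = i then i + 1 else if T x = i + 1 then i else T x := by
            simp only [Dmove]
            rw [← hxa, ← hxb, ← hxc, if_neg hC1, if_pos hC2, if_neg hCb, if_neg hCac]
          rw [hD]
          clear hC2 hC1 hCb hCac
          refine key_lemma hT
            (fun t => if t = i then i + 1 else if t = i + 1 then i else t)
            (by beta_reduce; split_ifs <;> first | omega | exact absurd ‹_› (by omega) | exact ‹False›.elim)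
            (bijOn_swap (by omega) (by omega) (by omega) (by omega)) ?_
          intro x y hx hy habs
          have habs' := (abs_eq hk0).mp habs
          by_cases hflip : (T x = i ∧ T y = i + 1) ∨ (T x = i + 1 ∧ T y = i)
          · exfalso
            rcases hflip with ⟨h1, h2⟩ | ⟨h1, h2⟩
            · have e1 := (idc x hx).2.1 h1
              have e2 := (idc y hy).2.2 h2
              subst e1; subst e2; omega
            · have e1 := (idc x hx).2.2 h1
              have e2 := (idc y hy).2.1 h2
              subst e1; subst e2; omega
          · beta_reduce
            split_ifs <;> omega
    · -- twisted branch
      have hC2c : |shiftedContent k xa - shiftedContent k xb| ≤ k ∧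
          |shiftedContent k xc - shiftedContent k xb| ≤ k ∧
          |shiftedContent k xa - shiftedContent k xc| ≤ k := by
        push_neg at hC2
        rw [max_le_iff, max_le_iff] at hC2
        exact ⟨hC2.1.1, hC2.1.2, hC2.2⟩
      rw [abs_le, abs_le, abs_le] at hC2c
      by_cases hCb : tupleRlt k xb xa ∧ tupleRlt k xb xc
      · have hCbc : shiftedContent k xb < shiftedContent k xa ∧
            shiftedContent k xb < shiftedContent k xc := by
          have h := hCb
          rw [rlt_iff (Ne.symm hab), rlt_iff hbc] at h
          exact h
        by_cases hCac : tupleRlt k xa xc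
        · -- order: xb < xa < xc ; u = i-1 (cell xa), v = i+1 (cell xc)
          have hCacc : shiftedContent k xa < shiftedContent k xc :=
            (rlt_iff hac).mp hCac
          have hD : Dmove k i T = fun x =>
              if T x = i then i - 1 else if T x = i - 1 then i + 1
              else if T x = i + 1 then i else T x := by
            simp only [Dmove]
            rw [← hxa, ← hxb, ← hxc, if_neg hC1, if_neg hC2, if_pos hCb, if_pos hCac, if_pos hCac]
          rw [hD]
          clear hC2 hC1 hCb hCac
          refine key_lemma hT
            (fun t => if t = i then i - 1 else if t = i - 1 then i + 1
              else if t = i + 1 then i else t)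
            (by beta_reduce; split_ifs <;> first | omega | exact absurd ‹_› (by omega) | exact ‹False›.elim)
            (bijOn_cycle (by omega) (by omega) (by omega) (by omega) (by omega)
              (by omega) (by omega) (by omega) (by omega)) ?_
          intro x y hx hy habs
          have habs' := (abs_eq hk0).mp habs
          by_cases hflip : ((T x = i ∧ T y = i - 1) ∨ (T x = i - 1 ∧ T y = i)) ∨
              ((T x = i - 1 ∧ T y = i + 1) ∨ (T x = i + 1 ∧ T y = i - 1))
          · exfalso
            rcases hflip with (⟨h1, h2⟩ | ⟨h1, h2⟩) | (⟨h1, h2⟩ | ⟨h1, h2⟩)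
            · have e1 := (idc x hx).2.1 h1; have e2 := (idc y hy).1 h2
              subst e1; subst e2; omega
            · have e1 := (idc x hx).1 h1; have e2 := (idc y hy).2.1 h2
              subst e1; subst e2; omega
            · have e1 := (idc x hx).1 h1; have e2 := (idc y hy).2.2 h2
              subst e1; subst e2; omega
            · have e1 := (idc x hx).2.2 h1; have e2 := (idc y hy).1 h2
              subst e1; subst e2; omega
          · beta_reduce
            split_ifs <;> omega
        · -- order: xb < xc < xa ; u = i+1 (cell xc), v = i-1 (cell xa)
          have hCacc : shiftedContent k xc < shiftedContent k xa := by
            have h := hCac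
            rw [rlt_iff hac] at h
            omega
          have hD : Dmove k i T = fun x =>
              if T x = i then i + 1 else if T x = i + 1 then i - 1
              else if T x = i - 1 then i else T x := by
            simp only [Dmove]
            rw [← hxa, ← hxb, ← hxc, if_neg hC1, if_neg hC2, if_pos hCb, if_neg hCac, if_neg hCac]
          rw [hD]
          clear hC2 hC1 hCb hCac
          refine key_lemma hT
            (fun t => if t = i then i + 1 else if t = i + 1 then i - 1
              else if t = i - 1 then i else t)
            (by beta_reduce; split_ifs <;> first | omega | exact absurd ‹_› (by omega) | exact ‹False›.elim)
            (bijOn_cycle (by omega) (by omega) (by omega) (by omega) (by omega)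
              (by omega) (by omega) (by omega) (by omega)) ?_
          intro x y hx hy habs
          have habs' := (abs_eq hk0).mp habs
          by_cases hflip : ((T x = i ∧ T y = i + 1) ∨ (T x = i + 1 ∧ T y = i)) ∨
              ((T x = i + 1 ∧ T y = i - 1) ∨ (T x = i - 1 ∧ T y = i + 1))
          · exfalso
            rcases hflip with (⟨h1, h2⟩ | ⟨h1, h2⟩) | (⟨h1, h2⟩ | ⟨h1, h2⟩)
            · have e1 := (idc x hx).2.1 h1; have e2 := (idc y hy).2.2 h2
              subst e1; subst e2; omega
            · have e1 := (idc x hx).2.2 h1; have e2 := (idc y hy).2.1 h2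
              subst e1; subst e2; omega
            · have e1 := (idc x hx).2.2 h1; have e2 := (idc y hy).1 h2
              subst e1; subst e2; omega
            · have e1 := (idc x hx).1 h1; have e2 := (idc y hy).2.2 h2
              subst e1; subst e2; omega
          · beta_reduce
            split_ifs <;> omega
      · have hCbc : shiftedContent k xa < shiftedContent k xb ∧
            shiftedContent k xc < shiftedContent k xb := by
          have h := hCb
          rw [rlt_iff (Ne.symm hab), rlt_iff hbc] at h
          omega
        by_cases hCac : tupleRlt k xa xc
        · -- order: xa < xc < xb ; u = i-1 (cell xa), v = i+1 (cell xc)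
          have hCacc : shiftedContent k xa < shiftedContent k xc :=
            (rlt_iff hac).mp hCac
          have hD : Dmove k i T = fun x =>
              if T x = i - 1 then i else if T x = i + 1 then i - 1
              else if T x = i then i + 1 else T x := by
            simp only [Dmove]
            rw [← hxa, ← hxb, ← hxc, if_neg hC1, if_neg hC2, if_neg hCb, if_pos hCac, if_pos hCac]
          rw [hD]
          clear hC2 hC1 hCb hCac
          refine key_lemma hT
            (fun t => if t = i - 1 then i else if t = i + 1 then i - 1
              else if t = i then i + 1 else t)
            (by beta_reduce; split_ifs <;> first | omega | exact absurd ‹_› (by omega) | exact ‹False›.elim)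
            (bijOn_cycle' (by omega) (by omega) (by omega) (by omega) (by omega)
              (by omega) (by omega) (by omega) (by omega)) ?_
          intro x y hx hy habs
          have habs' := (abs_eq hk0).mp habs
          by_cases hflip : ((T x = i - 1 ∧ T y = i + 1) ∨ (T x = i + 1 ∧ T y = i - 1)) ∨
              ((T x = i + 1 ∧ T y = i) ∨ (T x = i ∧ T y = i + 1))
          · exfalso
            rcases hflip with (⟨h1, h2⟩ | ⟨h1, h2⟩) | (⟨h1, h2⟩ | ⟨h1, h2⟩)
            · have e1 := (idc x hx).1 h1; have e2 := (idc y hy).2.2 h2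
              subst e1; subst e2; omega
            · have e1 := (idc x hx).2.2 h1; have e2 := (idc y hy).1 h2
              subst e1; subst e2; omega
            · have e1 := (idc x hx).2.2 h1; have e2 := (idc y hy).2.1 h2
              subst e1; subst e2; omega
            · have e1 := (idc x hx).2.1 h1; have e2 := (idc y hy).2.2 h2
              subst e1; subst e2; omega
          · beta_reduce
            split_ifs <;> omega
        · -- order: xc < xa < xb ; u = i+1 (cell xc), v = i-1 (cell xa)
          have hCacc : shiftedContent k xc < shiftedContent k xa := by
            have h := hCac
            rw [rlt_iff hac] at h
            omega
          have hD : Dmove k i T = fun x =>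
              if T x = i + 1 then i else if T x = i - 1 then i + 1
              else if T x = i then i - 1 else T x := by
            simp only [Dmove]
            rw [← hxa, ← hxb, ← hxc, if_neg hC1, if_neg hC2, if_neg hCb, if_neg hCac, if_neg hCac]
          rw [hD]
          clear hC2 hC1 hCb hCac
          refine key_lemma hT
            (fun t => if t = i + 1 then i else if t = i - 1 then i + 1
              else if t = i then i - 1 else t)
            (by beta_reduce; split_ifs <;> first | omega | exact absurd ‹_› (by omega) | exact ‹False›.elim)
            (bijOn_cycle' (by omega) (by omega) (by omega) (by omega) (by omega)
              (by omega) (by omega) (by omega) (by omega)) ?_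
          intro x y hx hy habs
          have habs' := (abs_eq hk0).mp habs
          by_cases hflip : ((T x = i + 1 ∧ T y = i - 1) ∨ (T x = i - 1 ∧ T y = i + 1)) ∨
              ((T x = i - 1 ∧ T y = i) ∨ (T x = i ∧ T y = i - 1))
          · exfalso
            rcases hflip with (⟨h1, h2⟩ | ⟨h1, h2⟩) | (⟨h1, h2⟩ | ⟨h1, h2⟩)
            · have e1 := (idc x hx).2.2 h1; have e2 := (idc y hy).1 h2
              subst e1; subst e2; omega
            · have e1 := (idc x hx).1 h1; have e2 := (idc y hy).2.2 h2
              subst e1; subst e2; omega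
            · have e1 := (idc x hx).1 h1; have e2 := (idc y hy).2.1 h2
              subst e1; subst e2; omega
            · have e1 := (idc x hx).2.1 h1; have e2 := (idc y hy).1 h2
              subst e1; subst e2; omega
          · beta_reduce
            split_ifs <;> omega
end

section
/- The twisted dual equivalence move d̃_i preserves the number of inversions of a permutation: inv(d̃_i(w)) = inv(w) for all permutations w of {1,...,n} and all 1 < i < n. -/
/-!  Permutations of `{1,…,n}` are modelled as `Equiv.Perm (Fin n)` with 0-based
values: the value `v : Fin n` stands for the paper's value `v+1`, and
`w.symm v` is the position of the value `v` in one-line notation.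
`dmove n i` is the paper's elementary dual equivalence involution `d_{i+1}`
(so `i` ranges over `1 ≤ i` and `i + 1 < n`, matching the paper's `1 < i+1 < n`),
and `dtmove n i` is the twisted move `d̃_{i+1}`. -/

/-- Haiman's elementary dual equivalence move: if the position of the middle
value `i` lies between the positions of `i-1` and `i+1`, do nothing; otherwise
interchange the value `i` with whichever of `i-1, i+1` is positioned further
from it. -/
def dmove (n : ℕ) (i : ℕ) (w : Equiv.Perm (Fin n)) : Equiv.Perm (Fin n) :=
  if h : 1 ≤ i ∧ i + 1 < n then
    let a : Fin n := ⟨i - 1, by omega⟩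
    let b : Fin n := ⟨i, by omega⟩
    let c : Fin n := ⟨i + 1, by omega⟩
    let pa := w.symm a
    let pb := w.symm b
    let pc := w.symm c
    if (pa < pb ∧ pb < pc) ∨ (pc < pb ∧ pb < pa) then w
    else if pb < pa ∧ pb < pc then
      (if pa < pc then Equiv.swap c b else Equiv.swap a b) * w
    else
      (if pa < pc then Equiv.swap a b else Equiv.swap c b) * w
  else w

/-- The twisted elementary dual equivalence move: if the position of the middle
value `i` lies between those of `i-1` and `i+1`, do nothing; otherwise
cyclically rotate the three values `i-1, i, i+1` so that `i` moves to the
other side of `i-1` and `i+1`, the outer two keeping their relative order. -/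
def dtmove (n : ℕ) (i : ℕ) (w : Equiv.Perm (Fin n)) : Equiv.Perm (Fin n) :=
  if h : 1 ≤ i ∧ i + 1 < n then
    let a : Fin n := ⟨i - 1, by omega⟩
    let b : Fin n := ⟨i, by omega⟩
    let c : Fin n := ⟨i + 1, by omega⟩
    let pa := w.symm a
    let pb := w.symm b
    let pc := w.symm c
    let u := if pa < pc then a else c   -- the outer value occurring first
    let v := if pa < pc then c else a   -- the outer value occurring last
    if (pa < pb ∧ pb < pc) ∨ (pc < pb ∧ pb < pa) then w
    else if pb < pa ∧ pb < pc then
      (Equiv.swap b u * Equiv.swap u v) * w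
    else
      (Equiv.swap u b * Equiv.swap b v) * w
  else w

/-- The inverse descent signature: `sig n w j = +1` if the (0-based) value `j`
occurs to the left of the value `j+1` in the one-line notation of `w`, and `-1`
otherwise.  (`sig n w (j-1)` is the paper's `σ(w)_j`.) -/
def sig (n : ℕ) (w : Equiv.Perm (Fin n)) (j : ℕ) : ℤ :=
  if h : j + 1 < n then
    if w.symm ⟨j, by omega⟩ < w.symm ⟨j + 1, h⟩ then 1 else -1
  else 1

/-- The number of inversions of a permutation of `Fin n`. -/
def linv (n : ℕ) (w : Equiv.Perm (Fin n)) : ℕ :=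
  ((Finset.univ : Finset (Fin n × Fin n)).filter
    (fun pq => pq.1 < pq.2 ∧ w pq.2 < w pq.1)).card

namespace DtmoveAux

variable {n : ℕ}

def tc (w : Equiv.Perm (Fin n)) (a b c : Fin n) : ℕ :=
  (if w.symm b < w.symm a then 1 else 0) +
  (if w.symm c < w.symm a then 1 else 0) +
  (if w.symm c < w.symm b then 1 else 0)

lemma triple_card (w : Equiv.Perm (Fin n)) (a b c : Fin n) (hab : a < b) (hbc : b < c) :
    ((Finset.univ : Finset (Fin n × Fin n)).filter fun pq =>
      (pq.1 < pq.2 ∧ w pq.2 < w pq.1) ∧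
      ((w pq.1 = a ∨ w pq.1 = b ∨ w pq.1 = c) ∧ (w pq.2 = a ∨ w pq.2 = b ∨ w pq.2 = c))).card
    = tc w a b c := by
  have hac : a < c := hab.trans hbc
  have hne1 : a ≠ b := ne_of_lt hab
  have hne2 : b ≠ c := ne_of_lt hbc
  have hne3 : a ≠ c := ne_of_lt hac
  rw [Finset.card_bij' (i := fun pq _ => (w pq.2, w pq.1))
      (j := fun xy _ => (w.symm xy.2, w.symm xy.1))
      (t := ({(a,b),(a,c),(b,c)} : Finset (Fin n × Fin n)).filter
        fun xy => w.symm xy.2 < w.symm xy.1)]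
  · rw [Finset.card_filter]
    rw [show ({(a,b),(a,c),(b,c)} : Finset (Fin n × Fin n))
        = insert (a,b) (insert (a,c) {(b,c)}) from rfl]
    rw [Finset.sum_insert (by simp [Prod.ext_iff, hne2, hne1]),
        Finset.sum_insert (by simp [Prod.ext_iff, hne1, hne3]),
        Finset.sum_singleton]
    simp [tc, Nat.add_assoc]
  · -- hi
    intro pq hpq
    simp only [Finset.mem_filter, Finset.mem_univ, true_and, Finset.mem_insert,
      Finset.mem_singleton] at hpq ⊢
    obtain ⟨⟨hlt, hinv⟩, h1, h2⟩ := hpq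
    constructor
    · rcases h1 with h1 | h1 | h1 <;> rcases h2 with h2 | h2 | h2 <;>
        rw [h1, h2] at hinv ⊢ <;>
        first
          | exact absurd hinv (lt_irrefl _)
          | exact absurd hinv (lt_asymm hab)
          | exact absurd hinv (lt_asymm hbc)
          | exact absurd hinv (lt_asymm hac)
          | simp [Prod.ext_iff]
    · simpa using hlt
  · -- hj
    intro xy hxy
    simp only [Finset.mem_filter, Finset.mem_univ, true_and, Finset.mem_insert,
      Finset.mem_singleton] at hxy ⊢
    obtain ⟨hmem, hlt⟩ := hxy
    refine ⟨⟨hlt, ?_⟩, ?_, ?_⟩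
    · simp only [Equiv.apply_symm_apply]
      rcases hmem with h | h | h <;> rw [h] <;> assumption
    · simp only [Equiv.apply_symm_apply]
      rcases hmem with h | h | h <;> rw [h] <;> simp
    · simp only [Equiv.apply_symm_apply]
      rcases hmem with h | h | h <;> rw [h] <;> simp
  · intro pq hpq; simp
  · intro xy hxy; simp

set_option maxHeartbeats 1000000 in
lemma linv_key (w π : Equiv.Perm (Fin n)) (a b c : Fin n)
    (hab : (a : ℕ) + 1 = b) (hbc : (b : ℕ) + 1 = c)
    (hfix : ∀ x : Fin n, x ≠ a → x ≠ b → x ≠ c → π x = x)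
    (hmap : ∀ x : Fin n, (x = a ∨ x = b ∨ x = c) → (π x = a ∨ π x = b ∨ π x = c))
    (htc : tc (π * w) a b c = tc w a b c) :
    linv n (π * w) = linv n w := by
  have hab' : a < b := by rw [Fin.lt_def]; omega
  have hbc' : b < c := by rw [Fin.lt_def]; omega
  have split : ∀ v : Equiv.Perm (Fin n), linv n v =
      ((Finset.univ : Finset (Fin n × Fin n)).filter fun pq =>
        (pq.1 < pq.2 ∧ v pq.2 < v pq.1) ∧
        ¬((v pq.1 = a ∨ v pq.1 = b ∨ v pq.1 = c) ∧
          (v pq.2 = a ∨ v pq.2 = b ∨ v pq.2 = c))).card + tc v a b c := by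
    intro v
    rw [← triple_card v a b c hab' hbc', linv]
    rw [← Finset.card_filter_add_card_filter_not
      (s := (Finset.univ : Finset (Fin n × Fin n)).filter
        fun pq => pq.1 < pq.2 ∧ v pq.2 < v pq.1)
      (fun pq => (v pq.1 = a ∨ v pq.1 = b ∨ v pq.1 = c) ∧
          (v pq.2 = a ∨ v pq.2 = b ∨ v pq.2 = c))]
    rw [Finset.filter_filter, Finset.filter_filter, Nat.add_comm]
  have hTiff : ∀ x : Fin n, (π x = a ∨ π x = b ∨ π x = c) ↔ (x = a ∨ x = b ∨ x = c) := by
    intro x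
    constructor
    · intro h
      by_contra hx
      push_neg at hx
      rw [hfix x hx.1 hx.2.1 hx.2.2] at h
      exact absurd h (by push_neg; exact hx)
    · exact hmap x
  have hout : ∀ x : Fin n, ¬(x = a ∨ x = b ∨ x = c) →
      ∀ y : Fin n, (y = a ∨ y = b ∨ y = c) → ∀ z : Fin n, (z = a ∨ z = b ∨ z = c) →
      ((x < y ↔ x < z) ∧ (y < x ↔ z < x)) := by
    intro x hx y hy z hz
    push_neg at hx
    simp only [Fin.ext_iff] at hx hy hz
    simp only [Fin.lt_def]
    omega
  rw [split (π * w), split w, htc]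
  have hsets : ((Finset.univ : Finset (Fin n × Fin n)).filter fun pq =>
      (pq.1 < pq.2 ∧ (π * w) pq.2 < (π * w) pq.1) ∧
      ¬(((π * w) pq.1 = a ∨ (π * w) pq.1 = b ∨ (π * w) pq.1 = c) ∧
        ((π * w) pq.2 = a ∨ (π * w) pq.2 = b ∨ (π * w) pq.2 = c)))
      = ((Finset.univ : Finset (Fin n × Fin n)).filter fun pq =>
      (pq.1 < pq.2 ∧ w pq.2 < w pq.1) ∧
      ¬((w pq.1 = a ∨ w pq.1 = b ∨ w pq.1 = c) ∧
        (w pq.2 = a ∨ w pq.2 = b ∨ w pq.2 = c))) := by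
    apply Finset.filter_congr
    intro pq _
    simp only [Equiv.Perm.mul_apply]
    by_cases h1 : (w pq.1 = a ∨ w pq.1 = b ∨ w pq.1 = c)
    · by_cases h2 : (w pq.2 = a ∨ w pq.2 = b ∨ w pq.2 = c)
      · simp only [hTiff, h1, h2, not_true, and_false, iff_false, and_true]
      · have hfix2 : π (w pq.2) = w pq.2 := by
          push_neg at h2; exact hfix _ h2.1 h2.2.1 h2.2.2
        have hcmp := (hout (w pq.2) h2 (π (w pq.1)) ((hTiff _).2 h1) (w pq.1) h1).1
        rw [hfix2]
        simp only [hTiff, h1, h2, hcmp, and_false, not_false_iff, and_true]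
    · by_cases h2 : (w pq.2 = a ∨ w pq.2 = b ∨ w pq.2 = c)
      · have hfix1 : π (w pq.1) = w pq.1 := by
          push_neg at h1; exact hfix _ h1.1 h1.2.1 h1.2.2
        have hcmp := (hout (w pq.1) h1 (π (w pq.2)) ((hTiff _).2 h2) (w pq.2) h2).2
        rw [hfix1]
        simp only [hTiff, h1, h2, hcmp, false_and, not_false_iff, and_true]
      · have hfix1 : π (w pq.1) = w pq.1 := by
          push_neg at h1; exact hfix _ h1.1 h1.2.1 h1.2.2
        have hfix2 : π (w pq.2) = w pq.2 := by
          push_neg at h2; exact hfix _ h2.1 h2.2.1 h2.2.2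
        rw [hfix1, hfix2]
  rw [hsets]

end DtmoveAux

section MainAux
variable {n : ℕ}

set_option maxHeartbeats 1000000 in
lemma main_aux (w : Equiv.Perm (Fin n)) (a b c : Fin n)
    (hab : (a : ℕ) + 1 = b) (hbc : (b : ℕ) + 1 = c) :
    linv n (
      if (w.symm a < w.symm b ∧ w.symm b < w.symm c) ∨
         (w.symm c < w.symm b ∧ w.symm b < w.symm a) then w
      else if w.symm b < w.symm a ∧ w.symm b < w.symm c then
        (Equiv.swap b (if w.symm a < w.symm c then a else c) *
          Equiv.swap (if w.symm a < w.symm c then a else c)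
            (if w.symm a < w.symm c then c else a)) * w
      else
        (Equiv.swap (if w.symm a < w.symm c then a else c) b *
          Equiv.swap b (if w.symm a < w.symm c then c else a)) * w)
    = linv n w := by
  have hne1 : a ≠ b := by simp [Fin.ext_iff]; omega
  have hne2 : b ≠ c := by simp [Fin.ext_iff]; omega
  have hne3 : a ≠ c := by simp [Fin.ext_iff]; omega
  have hpab : ((w.symm a : Fin n) : ℕ) ≠ ((w.symm b : Fin n) : ℕ) :=
    fun h => (w.symm.injective.ne hne1) (Fin.ext h)
  have hpbc : ((w.symm b : Fin n) : ℕ) ≠ ((w.symm c : Fin n) : ℕ) :=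
    fun h => (w.symm.injective.ne hne2) (Fin.ext h)
  have hpac : ((w.symm a : Fin n) : ℕ) ≠ ((w.symm c : Fin n) : ℕ) :=
    fun h => (w.symm.injective.ne hne3) (Fin.ext h)
  by_cases hmid : (w.symm a < w.symm b ∧ w.symm b < w.symm c) ∨
      (w.symm c < w.symm b ∧ w.symm b < w.symm a)
  · rw [if_pos hmid]
  · rw [if_neg hmid]
    simp only [Fin.lt_def] at hmid
    by_cases hord : w.symm a < w.symm c
    · simp only [if_pos hord]
      rw [Fin.lt_def] at hord
      by_cases hmin : w.symm b < w.symm a ∧ w.symm b < w.symm c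
      · rw [if_pos hmin]
        simp only [Fin.lt_def] at hmin
        refine DtmoveAux.linv_key w _ a b c hab hbc ?_ ?_ ?_
        · intro x hxa hxb hxc
          rw [Equiv.Perm.mul_apply, Equiv.swap_apply_of_ne_of_ne hxa hxc,
            Equiv.swap_apply_of_ne_of_ne hxb hxa]
        · intro x hx
          rcases hx with h | h | h <;> subst h <;>
            simp [Equiv.Perm.mul_apply, Equiv.swap_apply_def,
              hne1, hne2, hne3, hne1.symm, hne2.symm, hne3.symm]
        · have hsm : ∀ x, ((Equiv.swap b a * Equiv.swap a c) * w).symm x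
              = w.symm (Equiv.swap a c (Equiv.swap b a x)) := fun _ => rfl
          simp only [DtmoveAux.tc, hsm]
          simp only [Equiv.swap_apply_def, hne1, hne2, hne3,
            hne1.symm, hne2.symm, hne3.symm, if_true, if_false, ite_true, ite_false,
            eq_self_iff_true, Ne.symm, if_neg, hne3.symm]
          simp only [Fin.lt_def]
          split_ifs <;> omega
      · rw [if_neg hmin]
        simp only [Fin.lt_def, not_and, not_lt] at hmin
        refine DtmoveAux.linv_key w _ a b c hab hbc ?_ ?_ ?_
        · intro x hxa hxb hxc
          rw [Equiv.Perm.mul_apply, Equiv.swap_apply_of_ne_of_ne hxb hxc,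
            Equiv.swap_apply_of_ne_of_ne hxa hxb]
        · intro x hx
          rcases hx with h | h | h <;> subst h <;>
            simp [Equiv.Perm.mul_apply, Equiv.swap_apply_def,
              hne1, hne2, hne3, hne1.symm, hne2.symm, hne3.symm]
        · have hsm : ∀ x, ((Equiv.swap a b * Equiv.swap b c) * w).symm x
              = w.symm (Equiv.swap b c (Equiv.swap a b x)) := fun _ => rfl
          simp only [DtmoveAux.tc, hsm]
          simp only [Equiv.swap_apply_def, hne1, hne2, hne3,
            hne1.symm, hne2.symm, hne3.symm, if_true, if_false, ite_true, ite_false,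
            eq_self_iff_true, Ne.symm, if_neg]
          simp only [Fin.lt_def]
          split_ifs <;> omega
    · simp only [if_neg hord]
      rw [Fin.lt_def] at hord
      push_neg at hord
      by_cases hmin : w.symm b < w.symm a ∧ w.symm b < w.symm c
      · rw [if_pos hmin]
        simp only [Fin.lt_def] at hmin
        refine DtmoveAux.linv_key w _ a b c hab hbc ?_ ?_ ?_
        · intro x hxa hxb hxc
          rw [Equiv.Perm.mul_apply, Equiv.swap_apply_of_ne_of_ne hxc hxa,
            Equiv.swap_apply_of_ne_of_ne hxb hxc]
        · intro x hx
          rcases hx with h | h | h <;> subst h <;>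
            simp [Equiv.Perm.mul_apply, Equiv.swap_apply_def,
              hne1, hne2, hne3, hne1.symm, hne2.symm, hne3.symm]
        · have hsm : ∀ x, ((Equiv.swap b c * Equiv.swap c a) * w).symm x
              = w.symm (Equiv.swap c a (Equiv.swap b c x)) := fun _ => rfl
          simp only [DtmoveAux.tc, hsm]
          simp only [Equiv.swap_apply_def, hne1, hne2, hne3,
            hne1.symm, hne2.symm, hne3.symm, if_true, if_false, ite_true, ite_false,
            eq_self_iff_true, Ne.symm, if_neg]
          simp only [Fin.lt_def]
          split_ifs <;> omega
      · rw [if_neg hmin]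
        simp only [Fin.lt_def, not_and, not_lt] at hmin
        refine DtmoveAux.linv_key w _ a b c hab hbc ?_ ?_ ?_
        · intro x hxa hxb hxc
          rw [Equiv.Perm.mul_apply, Equiv.swap_apply_of_ne_of_ne hxb hxa,
            Equiv.swap_apply_of_ne_of_ne hxc hxb]
        · intro x hx
          rcases hx with h | h | h <;> subst h <;>
            simp [Equiv.Perm.mul_apply, Equiv.swap_apply_def,
              hne1, hne2, hne3, hne1.symm, hne2.symm, hne3.symm]
        · have hsm : ∀ x, ((Equiv.swap c b * Equiv.swap b a) * w).symm x
              = w.symm (Equiv.swap b a (Equiv.swap c b x)) := fun _ => rfl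
          simp only [DtmoveAux.tc, hsm]
          simp only [Equiv.swap_apply_def, hne1, hne2, hne3,
            hne1.symm, hne2.symm, hne3.symm, if_true, if_false, ite_true, ite_false,
            eq_self_iff_true, Ne.symm, if_neg]
          simp only [Fin.lt_def]
          split_ifs <;> omega


end MainAux

/-- the twisted dual equivalence move `d̃_i` preserves the
number of inversions of a permutation. -/
theorem dtmove_inv (n i : ℕ) (hi : 1 ≤ i) (hin : i + 1 < n)
    (w : Equiv.Perm (Fin n)) : linv n (dtmove n i w) = linv n w := by
  have hP : 1 ≤ i ∧ i + 1 < n := ⟨hi, hin⟩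
  rw [dtmove, dif_pos hP]
  exact main_aux w ⟨i - 1, by omega⟩ ⟨i, by omega⟩ ⟨i + 1, by omega⟩
    (by show i - 1 + 1 = i; omega) (by show i + 1 = i + 1; rfl)
end

section
/- The twisted dual equivalence move d̃_i preserves whether the first entry exceeds the last entry: for every permutation w of {1,...,n} with n ≥ 2 and every 1 < i < n, w_1 > w_n if and only if (d̃_i(w))_1 > (d̃_i(w))_n. -/
private lemma iff_aux (n i : ℕ) (f : Fin n → Fin n) (tx ty : Fin n)
    (hfix : ∀ z : Fin n, z.val < i - 1 ∨ i + 1 < z.val → f z = z)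
    (x y : Fin n)
    (hx : x = tx ∨ (x.val < i - 1 ∨ i + 1 < x.val))
    (hy : y = ty ∨ (y.val < i - 1 ∨ i + 1 < y.val))
    (htx : i - 1 ≤ tx.val ∧ tx.val ≤ i + 1)
    (hty : i - 1 ≤ ty.val ∧ ty.val ≤ i + 1)
    (hftx : i - 1 ≤ (f tx).val ∧ (f tx).val ≤ i + 1)
    (hfty : i - 1 ≤ (f ty).val ∧ (f ty).val ≤ i + 1)
    (hkey : ty < tx ↔ f ty < f tx) :
    y < x ↔ f y < f x := by
  rcases hx with rfl | hx <;> rcases hy with rfl | hy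
  · exact hkey
  · rw [hfix y hy]; simp only [Fin.lt_def] at *; omega
  · rw [hfix x hx]; simp only [Fin.lt_def] at *; omega
  · rw [hfix x hx, hfix y hy]

private lemma branch_gen (n i : ℕ) (hi : 1 ≤ i) (hin : i + 1 < n)
    (w σ : Equiv.Perm (Fin n)) (tx ty : Fin n)
    (hfix : ∀ z : Fin n, z.val < i - 1 ∨ i + 1 < z.val → σ z = z)
    (htx : i - 1 ≤ tx.val ∧ tx.val ≤ i + 1)
    (hty : i - 1 ≤ ty.val ∧ ty.val ≤ i + 1)
    (hftx : i - 1 ≤ (σ tx).val ∧ (σ tx).val ≤ i + 1)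
    (hfty : i - 1 ≤ (σ ty).val ∧ (σ ty).val ≤ i + 1)
    (hkey : ty < tx ↔ σ ty < σ tx)
    (hx : ∀ z : Fin n, i - 1 ≤ z.val → z.val ≤ i + 1 → z ≠ tx → 0 < (w.symm z).val)
    (hy : ∀ z : Fin n, i - 1 ≤ z.val → z.val ≤ i + 1 → z ≠ ty → (w.symm z).val < n - 1) :
    w ⟨n - 1, by omega⟩ < w ⟨0, by omega⟩ ↔
      (σ * w) ⟨n - 1, by omega⟩ < (σ * w) ⟨0, by omega⟩ := by
  have hp0 : (0:ℕ) < n := by omega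
  have hpn : n - 1 < n := by omega
  have hxx : w ⟨0, hp0⟩ = tx ∨ ((w ⟨0, hp0⟩).val < i - 1 ∨ i + 1 < (w ⟨0, hp0⟩).val) := by
    by_cases h : w ⟨0, hp0⟩ = tx
    · exact Or.inl h
    by_cases h2 : i - 1 ≤ (w ⟨0, hp0⟩).val ∧ (w ⟨0, hp0⟩).val ≤ i + 1
    · exfalso
      have h3 := hx _ h2.1 h2.2 h
      rw [Equiv.symm_apply_apply] at h3
      simp at h3
    · right; omega
  have hyy : w ⟨n - 1, hpn⟩ = ty ∨
      ((w ⟨n - 1, hpn⟩).val < i - 1 ∨ i + 1 < (w ⟨n - 1, hpn⟩).val) := by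
    by_cases h : w ⟨n - 1, hpn⟩ = ty
    · exact Or.inl h
    by_cases h2 : i - 1 ≤ (w ⟨n - 1, hpn⟩).val ∧ (w ⟨n - 1, hpn⟩).val ≤ i + 1
    · exfalso
      have h3 := hy _ h2.1 h2.2 h
      rw [Equiv.symm_apply_apply] at h3
      simp at h3
    · right; omega
  have main := iff_aux n i (⇑σ) tx ty hfix _ _ hxx hyy htx hty hftx hfty hkey
  simpa [Equiv.Perm.mul_apply] using main


private lemma branchB1 (n i : ℕ) (hi : 1 ≤ i) (hin : i + 1 < n) (w : Equiv.Perm (Fin n))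
    (a b c : Fin n)
    (hav : a.val = i - 1) (hbv : b.val = i) (hcv : c.val = i + 1)
    (h1 : (w.symm b).val < (w.symm a).val) (h2 : (w.symm b).val < (w.symm c).val) (h3 : (w.symm a).val < (w.symm c).val) :
    w ⟨n - 1, by omega⟩ < w ⟨0, by omega⟩ ↔
      ((Equiv.swap b a * Equiv.swap a c) * w) ⟨n - 1, by omega⟩ <
        ((Equiv.swap b a * Equiv.swap a c) * w) ⟨0, by omega⟩ := by
  have hab : a ≠ b := fun h => by rw [Fin.ext_iff, hav, hbv] at h; omega
  have hbc : b ≠ c := fun h => by rw [Fin.ext_iff, hbv, hcv] at h; omega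
  have hac : a ≠ c := fun h => by rw [Fin.ext_iff, hav, hcv] at h; omega
  have qa := (w.symm a).isLt
  have qb := (w.symm b).isLt
  have qc := (w.symm c).isLt
  have e1 : (Equiv.swap b a * Equiv.swap a c) b = a := by
    rw [Equiv.Perm.mul_apply, Equiv.swap_apply_of_ne_of_ne hab.symm hbc, Equiv.swap_apply_left]
  have e2 : (Equiv.swap b a * Equiv.swap a c) c = b := by
    rw [Equiv.Perm.mul_apply, Equiv.swap_apply_right, Equiv.swap_apply_right]
  refine branch_gen n i hi hin w _ b c ?_ ?_ ?_ ?_ ?_ ?_ ?_ ?_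
  · intro z hz
    have hza : z ≠ a := fun h => by rw [h, hav] at hz; omega
    have hzb : z ≠ b := fun h => by rw [h, hbv] at hz; omega
    have hzc : z ≠ c := fun h => by rw [h, hcv] at hz; omega
    rw [Equiv.Perm.mul_apply, Equiv.swap_apply_of_ne_of_ne hza hzc,
      Equiv.swap_apply_of_ne_of_ne hzb hza]
  · rw [hbv]; omega
  · rw [hcv]; omega
  · rw [e1, hav]; omega
  · rw [e2, hbv]; omega
  · rw [e1, e2]
    simp only [Fin.lt_def, hav, hbv, hcv]
    omega
  · intro z hz1 hz2 hz3
    have hz : z.val = i - 1 ∨ z.val = i ∨ z.val = i + 1 := by omega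
    rcases hz with h | h | h
    · rw [show z = a from Fin.ext (by rw [hav]; exact h)]; omega
    · exact absurd (Fin.ext (by rw [hbv]; exact h)) hz3
    · rw [show z = c from Fin.ext (by rw [hcv]; exact h)]; omega
  · intro z hz1 hz2 hz3
    have hz : z.val = i - 1 ∨ z.val = i ∨ z.val = i + 1 := by omega
    rcases hz with h | h | h
    · rw [show z = a from Fin.ext (by rw [hav]; exact h)]; omega
    · rw [show z = b from Fin.ext (by rw [hbv]; exact h)]; omega
    · exact absurd (Fin.ext (by rw [hcv]; exact h)) hz3


private lemma branchB2 (n i : ℕ) (hi : 1 ≤ i) (hin : i + 1 < n) (w : Equiv.Perm (Fin n))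
    (a b c : Fin n)
    (hav : a.val = i - 1) (hbv : b.val = i) (hcv : c.val = i + 1)
    (h1 : (w.symm b).val < (w.symm a).val) (h2 : (w.symm b).val < (w.symm c).val) (h3 : (w.symm c).val < (w.symm a).val) :
    w ⟨n - 1, by omega⟩ < w ⟨0, by omega⟩ ↔
      ((Equiv.swap b c * Equiv.swap c a) * w) ⟨n - 1, by omega⟩ <
        ((Equiv.swap b c * Equiv.swap c a) * w) ⟨0, by omega⟩ := by
  have hab : a ≠ b := fun h => by rw [Fin.ext_iff, hav, hbv] at h; omega
  have hbc : b ≠ c := fun h => by rw [Fin.ext_iff, hbv, hcv] at h; omega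
  have hac : a ≠ c := fun h => by rw [Fin.ext_iff, hav, hcv] at h; omega
  have qa := (w.symm a).isLt
  have qb := (w.symm b).isLt
  have qc := (w.symm c).isLt
  have e1 : (Equiv.swap b c * Equiv.swap c a) b = c := by
    rw [Equiv.Perm.mul_apply, Equiv.swap_apply_of_ne_of_ne hbc hab.symm, Equiv.swap_apply_left]
  have e2 : (Equiv.swap b c * Equiv.swap c a) a = b := by
    rw [Equiv.Perm.mul_apply, Equiv.swap_apply_right, Equiv.swap_apply_right]
  refine branch_gen n i hi hin w _ b a ?_ ?_ ?_ ?_ ?_ ?_ ?_ ?_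
  · intro z hz
    have hza : z ≠ a := fun h => by rw [h, hav] at hz; omega
    have hzb : z ≠ b := fun h => by rw [h, hbv] at hz; omega
    have hzc : z ≠ c := fun h => by rw [h, hcv] at hz; omega
    rw [Equiv.Perm.mul_apply, Equiv.swap_apply_of_ne_of_ne hzc hza,
      Equiv.swap_apply_of_ne_of_ne hzb hzc]
  · rw [hbv]; omega
  · rw [hav]; omega
  · rw [e1, hcv]; omega
  · rw [e2, hbv]; omega
  · rw [e1, e2]
    simp only [Fin.lt_def, hav, hbv, hcv]
    omega
  · intro z hz1 hz2 hz3
    have hz : z.val = i - 1 ∨ z.val = i ∨ z.val = i + 1 := by omega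
    rcases hz with h | h | h
    · rw [show z = a from Fin.ext (by rw [hav]; exact h)]; omega
    · exact absurd (Fin.ext (by rw [hbv]; exact h)) hz3
    · rw [show z = c from Fin.ext (by rw [hcv]; exact h)]; omega
  · intro z hz1 hz2 hz3
    have hz : z.val = i - 1 ∨ z.val = i ∨ z.val = i + 1 := by omega
    rcases hz with h | h | h
    · exact absurd (Fin.ext (by rw [hav]; exact h)) hz3
    · rw [show z = b from Fin.ext (by rw [hbv]; exact h)]; omega
    · rw [show z = c from Fin.ext (by rw [hcv]; exact h)]; omega


private lemma branchB3 (n i : ℕ) (hi : 1 ≤ i) (hin : i + 1 < n) (w : Equiv.Perm (Fin n))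
    (a b c : Fin n)
    (hav : a.val = i - 1) (hbv : b.val = i) (hcv : c.val = i + 1)
    (h1 : (w.symm a).val < (w.symm b).val) (h2 : (w.symm c).val < (w.symm b).val) (h3 : (w.symm a).val < (w.symm c).val) :
    w ⟨n - 1, by omega⟩ < w ⟨0, by omega⟩ ↔
      ((Equiv.swap a b * Equiv.swap b c) * w) ⟨n - 1, by omega⟩ <
        ((Equiv.swap a b * Equiv.swap b c) * w) ⟨0, by omega⟩ := by
  have hab : a ≠ b := fun h => by rw [Fin.ext_iff, hav, hbv] at h; omega
  have hbc : b ≠ c := fun h => by rw [Fin.ext_iff, hbv, hcv] at h; omega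
  have hac : a ≠ c := fun h => by rw [Fin.ext_iff, hav, hcv] at h; omega
  have qa := (w.symm a).isLt
  have qb := (w.symm b).isLt
  have qc := (w.symm c).isLt
  have e1 : (Equiv.swap a b * Equiv.swap b c) a = b := by
    rw [Equiv.Perm.mul_apply, Equiv.swap_apply_of_ne_of_ne hab hac, Equiv.swap_apply_left]
  have e2 : (Equiv.swap a b * Equiv.swap b c) b = c := by
    rw [Equiv.Perm.mul_apply, Equiv.swap_apply_left, Equiv.swap_apply_of_ne_of_ne hac.symm hbc.symm]
  refine branch_gen n i hi hin w _ a b ?_ ?_ ?_ ?_ ?_ ?_ ?_ ?_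
  · intro z hz
    have hza : z ≠ a := fun h => by rw [h, hav] at hz; omega
    have hzb : z ≠ b := fun h => by rw [h, hbv] at hz; omega
    have hzc : z ≠ c := fun h => by rw [h, hcv] at hz; omega
    rw [Equiv.Perm.mul_apply, Equiv.swap_apply_of_ne_of_ne hzb hzc,
      Equiv.swap_apply_of_ne_of_ne hza hzb]
  · rw [hav]; omega
  · rw [hbv]; omega
  · rw [e1, hbv]; omega
  · rw [e2, hcv]; omega
  · rw [e1, e2]
    simp only [Fin.lt_def, hav, hbv, hcv]
    omega
  · intro z hz1 hz2 hz3
    have hz : z.val = i - 1 ∨ z.val = i ∨ z.val = i + 1 := by omega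
    rcases hz with h | h | h
    · exact absurd (Fin.ext (by rw [hav]; exact h)) hz3
    · rw [show z = b from Fin.ext (by rw [hbv]; exact h)]; omega
    · rw [show z = c from Fin.ext (by rw [hcv]; exact h)]; omega
  · intro z hz1 hz2 hz3
    have hz : z.val = i - 1 ∨ z.val = i ∨ z.val = i + 1 := by omega
    rcases hz with h | h | h
    · rw [show z = a from Fin.ext (by rw [hav]; exact h)]; omega
    · exact absurd (Fin.ext (by rw [hbv]; exact h)) hz3
    · rw [show z = c from Fin.ext (by rw [hcv]; exact h)]; omega


private lemma branchB4 (n i : ℕ) (hi : 1 ≤ i) (hin : i + 1 < n) (w : Equiv.Perm (Fin n))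
    (a b c : Fin n)
    (hav : a.val = i - 1) (hbv : b.val = i) (hcv : c.val = i + 1)
    (h1 : (w.symm a).val < (w.symm b).val) (h2 : (w.symm c).val < (w.symm b).val) (h3 : (w.symm c).val < (w.symm a).val) :
    w ⟨n - 1, by omega⟩ < w ⟨0, by omega⟩ ↔
      ((Equiv.swap c b * Equiv.swap b a) * w) ⟨n - 1, by omega⟩ <
        ((Equiv.swap c b * Equiv.swap b a) * w) ⟨0, by omega⟩ := by
  have hab : a ≠ b := fun h => by rw [Fin.ext_iff, hav, hbv] at h; omega
  have hbc : b ≠ c := fun h => by rw [Fin.ext_iff, hbv, hcv] at h; omega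
  have hac : a ≠ c := fun h => by rw [Fin.ext_iff, hav, hcv] at h; omega
  have qa := (w.symm a).isLt
  have qb := (w.symm b).isLt
  have qc := (w.symm c).isLt
  have e1 : (Equiv.swap c b * Equiv.swap b a) c = b := by
    rw [Equiv.Perm.mul_apply, Equiv.swap_apply_of_ne_of_ne hbc.symm hac.symm, Equiv.swap_apply_left]
  have e2 : (Equiv.swap c b * Equiv.swap b a) b = a := by
    rw [Equiv.Perm.mul_apply, Equiv.swap_apply_left, Equiv.swap_apply_of_ne_of_ne hac hab]
  refine branch_gen n i hi hin w _ c b ?_ ?_ ?_ ?_ ?_ ?_ ?_ ?_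
  · intro z hz
    have hza : z ≠ a := fun h => by rw [h, hav] at hz; omega
    have hzb : z ≠ b := fun h => by rw [h, hbv] at hz; omega
    have hzc : z ≠ c := fun h => by rw [h, hcv] at hz; omega
    rw [Equiv.Perm.mul_apply, Equiv.swap_apply_of_ne_of_ne hzb hza,
      Equiv.swap_apply_of_ne_of_ne hzc hzb]
  · rw [hcv]; omega
  · rw [hbv]; omega
  · rw [e1, hbv]; omega
  · rw [e2, hav]; omega
  · rw [e1, e2]
    simp only [Fin.lt_def, hav, hbv, hcv]
    omega
  · intro z hz1 hz2 hz3
    have hz : z.val = i - 1 ∨ z.val = i ∨ z.val = i + 1 := by omega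
    rcases hz with h | h | h
    · rw [show z = a from Fin.ext (by rw [hav]; exact h)]; omega
    · rw [show z = b from Fin.ext (by rw [hbv]; exact h)]; omega
    · exact absurd (Fin.ext (by rw [hcv]; exact h)) hz3
  · intro z hz1 hz2 hz3
    have hz : z.val = i - 1 ∨ z.val = i ∨ z.val = i + 1 := by omega
    rcases hz with h | h | h
    · rw [show z = a from Fin.ext (by rw [hav]; exact h)]; omega
    · exact absurd (Fin.ext (by rw [hbv]; exact h)) hz3
    · rw [show z = c from Fin.ext (by rw [hcv]; exact h)]; omega


set_option maxHeartbeats 1000000 in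
/-- the twisted dual equivalence move `d̃_i` preserves whether
the first entry exceeds the last entry of the one-line notation. -/
theorem dtmove_first_last (n i : ℕ) (hn : 2 ≤ n) (hi : 1 ≤ i) (hin : i + 1 < n)
    (w : Equiv.Perm (Fin n)) :
    (w ⟨n - 1, by omega⟩ < w ⟨0, by omega⟩ ↔
      (dtmove n i w) ⟨n - 1, by omega⟩ < (dtmove n i w) ⟨0, by omega⟩) := by
  unfold dtmove
  rw [dif_pos ⟨hi, hin⟩]
  simp only []
  set a : Fin n := ⟨i - 1, by omega⟩ with ha
  set b : Fin n := ⟨i, by omega⟩ with hb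
  set c : Fin n := ⟨i + 1, by omega⟩ with hc
  have hav : a.val = i - 1 := by rw [ha]
  have hbv : b.val = i := by rw [hb]
  have hcv : c.val = i + 1 := by rw [hc]
  have hab : a ≠ b := fun h => by rw [Fin.ext_iff, hav, hbv] at h; omega
  have hbc : b ≠ c := fun h => by rw [Fin.ext_iff, hbv, hcv] at h; omega
  have hac : a ≠ c := fun h => by rw [Fin.ext_iff, hav, hcv] at h; omega
  by_cases hmid : (w.symm a < w.symm b ∧ w.symm b < w.symm c) ∨
      (w.symm c < w.symm b ∧ w.symm b < w.symm a)
  · rw [if_pos hmid]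
  rw [if_neg hmid]
  by_cases hmin : w.symm b < w.symm a ∧ w.symm b < w.symm c
  · rw [if_pos hmin]
    obtain ⟨h1, h2⟩ := hmin
    rw [Fin.lt_def] at h1 h2
    by_cases hpac : w.symm a < w.symm c
    · rw [if_pos hpac, if_pos hpac]
      rw [Fin.lt_def] at hpac
      exact branchB1 n i hi hin w a b c hav hbv hcv h1 h2 hpac
    · rw [if_neg hpac, if_neg hpac]
      have h3 : (w.symm c).val < (w.symm a).val := by
        rw [not_lt, Fin.le_def] at hpac
        have h4 : (w.symm c).val ≠ (w.symm a).val :=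
          fun h => hac (w.symm.injective (Fin.ext h)).symm
        omega
      exact branchB2 n i hi hin w a b c hav hbv hcv h1 h2 h3
  · rw [if_neg hmin]
    have hd1 : (w.symm a).val ≠ (w.symm b).val :=
      fun h => hab (w.symm.injective (Fin.ext h))
    have hd2 : (w.symm b).val ≠ (w.symm c).val :=
      fun h => hbc (w.symm.injective (Fin.ext h))
    have hmid' := hmid
    have hmin' := hmin
    simp only [Fin.lt_def, not_or, not_and, not_lt] at hmid' hmin'
    have h1 : (w.symm a).val < (w.symm b).val := by omega
    have h2 : (w.symm c).val < (w.symm b).val := by omega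
    by_cases hpac : w.symm a < w.symm c
    · rw [if_pos hpac, if_pos hpac]
      rw [Fin.lt_def] at hpac
      exact branchB3 n i hi hin w a b c hav hbv hcv h1 h2 hpac
    · rw [if_neg hpac, if_neg hpac]
      have h3 : (w.symm c).val < (w.symm a).val := by
        rw [not_lt, Fin.le_def] at hpac
        have h4 : (w.symm c).val ≠ (w.symm a).val :=
          fun h => hac (w.symm.injective (Fin.ext h)).symm
        omega
      exact branchB4 n i hi hin w a b c hav hbv hcv h1 h2 h3
end
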